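/- For a Lipschitz continuous function f on [-1,1] with Lipschitz constant λ > 0, and for any integer k ≥ 1, the inner product of f with the weighted k-th normalized Chebyshev polynomial satisfies |∫_{-1}^{1} f(x) · T̄_k(x) · (1-x²)^{-1/2} dx| ≤ 2λ/k, where T̄_k = T_k/√(π/2) is the normalized Chebyshev polynomial of the first kind. -/

import Mathlib

open Real MeasureTheory Set intervalIntegral

private lemma chebAux_image_cos : Real.cos '' Set.Ioo 0 π = Set.Ioo (-1 : ℝ) 1 := by
  ext y
  constructor
  · rintro ⟨θ, hθ, rfl⟩
    have h1 : Real.cos θ < Real.cos 0 :=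
      Real.strictAntiOn_cos ⟨le_refl 0, Real.pi_pos.le⟩ ⟨hθ.1.le, hθ.2.le⟩ hθ.1
    have h2 : Real.cos π < Real.cos θ :=
      Real.strictAntiOn_cos ⟨hθ.1.le, hθ.2.le⟩ ⟨Real.pi_pos.le, le_refl π⟩ hθ.2
    simpa [Real.cos_zero, Real.cos_pi] using And.intro h2 h1
  · intro hy
    obtain ⟨θ, hθ, rfl⟩ := Real.surjOn_cos (Set.Ioo_subset_Icc_self hy)
    refine ⟨θ, ⟨?_, ?_⟩, rfl⟩
    · rcases hθ.1.lt_or_eq with h | h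
      · exact h
      · exfalso; rw [← h, Real.cos_zero] at hy; exact absurd hy.2 (lt_irrefl 1)
    · rcases hθ.2.lt_or_eq with h | h
      · exact h
      · exfalso; rw [h, Real.cos_pi] at hy; exact absurd hy.1 (lt_irrefl (-1))

private lemma chebAux_sin_sq_int (d : ℝ) : (∫ θ in (-π)..π, Real.sin (θ + d) ^ 2) = π := by
  rw [intervalIntegral.integral_comp_add_right (fun u => Real.sin u ^ 2) d,
    integral_sin_sq]
  rw [show -π + d = (π + d) - 2 * π by ring, Real.sin_sub_two_pi, Real.cos_sub_two_pi]
  ring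

private lemma chebAux_cos_sq_int (k : ℕ) (hk : 1 ≤ k) :
    (∫ θ in (-π)..π, Real.cos (k * θ) ^ 2) = π := by
  have hkR : (0:ℝ) < k := by exact_mod_cast hk
  rw [intervalIntegral.integral_comp_mul_left (fun u => Real.cos u ^ 2) (ne_of_gt hkR),
    integral_cos_sq]
  rw [show (k:ℝ) * -π = -(k * π) by ring, Real.sin_neg, Real.cos_neg,
    Real.sin_nat_mul_pi]
  rw [smul_eq_mul, inv_mul_eq_div, div_eq_iff hkR.ne']
  ring

/-- key identity: `4 ∫_0^π g(θ) cos(kθ) dθ = ∫_{-π}^π (g(θ) - g(θ+π/k)) cos(kθ) dθ`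
for an even `2π`-periodic continuous `g`. -/
private lemma chebAux_four_eq (g : ℝ → ℝ) (hg : Continuous g) (hgsymm : ∀ x, g (-x) = g x)
    (hgper : ∀ x, g (x + 2 * π) = g x) (k : ℕ) (hk : 1 ≤ k) :
    4 * (∫ θ in (0:ℝ)..π, g θ * Real.cos (k * θ))
      = ∫ θ in (-π)..π, (g θ - g (θ + π / k)) * Real.cos (k * θ) := by
  have hkR : (0:ℝ) < k := by exact_mod_cast hk
  set φ : ℝ → ℝ := fun θ => g θ * Real.cos (k * θ) with hφ
  have hφc : Continuous φ := hg.mul (by fun_prop)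
  set J : ℝ := ∫ θ in (0:ℝ)..π, φ θ with hJ
  have heven : ∀ x, φ (-x) = φ x := by
    intro x
    simp only [hφ, hgsymm, mul_neg, Real.cos_neg]
  have e1 : (∫ θ in (-π)..(0:ℝ), φ θ) = J := by
    have := intervalIntegral.integral_comp_neg (a := (0:ℝ)) (b := π) φ
    simp only [neg_zero] at this
    rw [← this]
    simp only [heven, hJ]
  have esplit : (∫ θ in (-π)..π, φ θ) = 2 * J := by
    rw [← intervalIntegral.integral_add_adjacent_intervals
      (b := (0:ℝ)) (hφc.intervalIntegrable _ _) (hφc.intervalIntegrable _ _), e1]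
    ring
  have hper : Function.Periodic φ (2 * π) := by
    intro x
    simp only [hφ]
    rw [show (k:ℝ) * (x + 2 * π) = k * x + k * (2 * π) by ring,
      Real.cos_add_nat_mul_two_pi, hgper]
  have hshiftc : Continuous fun θ : ℝ => g (θ + π / k) * Real.cos (k * θ) :=
    (hg.comp (continuous_id.add continuous_const)).mul
      (Real.continuous_cos.comp (continuous_const.mul continuous_id))
  have e2 : (∫ θ in (-π)..π, g (θ + π / k) * Real.cos (k * θ)) = -(2 * J) := by
    have hpt : ∀ θ : ℝ, g (θ + π / k) * Real.cos (k * θ) = -(φ (θ + π / k)) := by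
      intro θ
      have h3 : (k:ℝ) * (θ + π / k) = k * θ + π := by field_simp
      simp only [hφ, h3, Real.cos_add_pi]
      ring
    simp only [hpt]
    rw [intervalIntegral.integral_neg]
    rw [intervalIntegral.integral_comp_add_right φ (π / k)]
    have := hper.intervalIntegral_add_eq (-π + π / k) (-π)
    rw [show -π + π / k + 2 * π = π + π / k by ring, show -π + 2 * π = π by ring] at this
    rw [this, esplit]
  have hsub : (∫ θ in (-π)..π, (g θ - g (θ + π / k)) * Real.cos (k * θ))
      = (∫ θ in (-π)..π, φ θ) - ∫ θ in (-π)..π, g (θ + π / k) * Real.cos (k * θ) := by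
    rw [← intervalIntegral.integral_sub (hφc.intervalIntegrable _ _)
      (hshiftc.intervalIntegrable _ _)]
    congr 1
    funext θ
    simp only [hφ]
    ring
  rw [hsub, esplit, e2]
  ring

set_option maxHeartbeats 1000000 in
/-- For a Lipschitz continuous function `f` on `[-1,1]` with Lipschitz constant
`lam > 0`, and any `k ≥ 1`, the inner product of `f` with the weighted `k`-th normalized
Chebyshev polynomial `T̄_k = T_k / √(π/2)` against the weight `(1-x²)^{-1/2}` is at most
`2·lam/k` in absolute value. -/
theorem stmt_0 (f : ℝ → ℝ) (lam : ℝ) (hlam : 0 < lam)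
    (hf : LipschitzOnWith (Real.toNNReal lam) f (Set.Icc (-1 : ℝ) 1))
    (k : ℕ) (hk : 1 ≤ k) :
    |∫ x in (-1 : ℝ)..1,
        f x * ((Polynomial.Chebyshev.T ℝ (k : ℤ)).eval x / Real.sqrt (Real.pi / 2)) *
          (Real.sqrt (1 - x ^ 2))⁻¹| ≤ 2 * lam / k := by
  have hkR : (0:ℝ) < k := by exact_mod_cast hk
  set c : ℝ := Real.sqrt (π / 2) with hc
  have hcpos : 0 < c := Real.sqrt_pos.mpr (by positivity)
  set g : ℝ → ℝ := fun θ => f (Real.cos θ) with hgdef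
  have hgc : Continuous g := hf.continuousOn.comp_continuous Real.continuous_cos
    (fun x => ⟨Real.neg_one_le_cos x, Real.cos_le_one x⟩)
  -- Step A: change of variables x = cos θ
  have hA : (∫ x in (-1:ℝ)..1,
        f x * ((Polynomial.Chebyshev.T ℝ (k : ℤ)).eval x / c) * (Real.sqrt (1 - x ^ 2))⁻¹)
      = (∫ θ in (0:ℝ)..π, g θ * Real.cos (k * θ)) / c := by
    set F : ℝ → ℝ := fun x =>
      f x * ((Polynomial.Chebyshev.T ℝ (k : ℤ)).eval x / c) * (Real.sqrt (1 - x ^ 2))⁻¹ with hF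
    have h1 : (∫ x in (-1:ℝ)..1, F x) = ∫ x in Set.Ioo (-1:ℝ) 1, F x := by
      rw [intervalIntegral.integral_of_le (by norm_num),
        MeasureTheory.integral_Ioc_eq_integral_Ioo]
    have h2 : (∫ x in Set.Ioo (-1:ℝ) 1, F x)
        = ∫ θ in Set.Ioo (0:ℝ) π, |(-Real.sin θ)| • F (Real.cos θ) := by
      rw [← chebAux_image_cos]
      exact integral_image_eq_integral_abs_deriv_smul measurableSet_Ioo
        (fun θ _ => (Real.hasDerivAt_cos θ).hasDerivWithinAt)
        (Real.injOn_cos.mono Set.Ioo_subset_Icc_self) F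
    have h3 : (∫ θ in Set.Ioo (0:ℝ) π, |(-Real.sin θ)| • F (Real.cos θ))
        = ∫ θ in Set.Ioo (0:ℝ) π, g θ * Real.cos (k * θ) / c := by
      refine MeasureTheory.setIntegral_congr_fun measurableSet_Ioo (fun θ hθ => ?_)
      have hs : 0 < Real.sin θ := Real.sin_pos_of_pos_of_lt_pi hθ.1 hθ.2
      have hsq : Real.sqrt (1 - Real.cos θ ^ 2) = Real.sin θ := by
        rw [show (1 : ℝ) - Real.cos θ ^ 2 = Real.sin θ ^ 2 by
          nlinarith [Real.sin_sq_add_cos_sq θ]]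
        exact Real.sqrt_sq hs.le
      have hT : (Polynomial.Chebyshev.T ℝ (k:ℤ)).eval (Real.cos θ) = Real.cos (k * θ) := by
        rw [Polynomial.Chebyshev.T_real_cos]; norm_num
      simp only [hF, smul_eq_mul, hsq, hT, abs_neg, abs_of_pos hs, hgdef]
      field_simp
    have h4 : (∫ θ in Set.Ioo (0:ℝ) π, g θ * Real.cos (k * θ) / c)
        = (∫ θ in (0:ℝ)..π, g θ * Real.cos (k * θ)) / c := by
      rw [intervalIntegral.integral_of_le Real.pi_pos.le,
        MeasureTheory.integral_Ioc_eq_integral_Ioo, MeasureTheory.integral_div]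
    rw [h1, h2, h3, h4]
  -- properties of g
  have hgsymm : ∀ x, g (-x) = g x := by intro x; simp [hgdef, Real.cos_neg]
  have hgper : ∀ x, g (x + 2 * π) = g x := by intro x; simp [hgdef, Real.cos_add_two_pi]
  -- Step B
  set J : ℝ := ∫ θ in (0:ℝ)..π, g θ * Real.cos (k * θ) with hJdef
  have hB := chebAux_four_eq g hgc hgsymm hgper k hk
  -- Step C : bound the right-hand side
  set d : ℝ := π / (2 * k) with hd
  have hd0 : 0 ≤ d := by positivity
  have hk1 : (1:ℝ) ≤ k := by exact_mod_cast hk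
  have hdπ : d ≤ π := by
    rw [hd, div_le_iff₀ (by positivity)]
    nlinarith [Real.pi_pos, hk1]
  have hs0 : 0 ≤ Real.sin d := Real.sin_nonneg_of_nonneg_of_le_pi hd0 hdπ
  have hC : |∫ θ in (-π)..π, (g θ - g (θ + π / k)) * Real.cos (k * θ)|
      ≤ lam * Real.sin d * (2 * π) := by
    have hhd : π / (k:ℝ) = 2 * d := by rw [hd]; field_simp
    set B : ℝ → ℝ := fun θ =>
      lam * Real.sin d * (Real.sin (θ + d) ^ 2 + Real.cos (k * θ) ^ 2) with hBdef
    have hptbd : ∀ θ : ℝ, |(g θ - g (θ + π / k)) * Real.cos (k * θ)| ≤ B θ := by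
      intro θ
      have hlip : |g θ - g (θ + π / k)| ≤ lam * |Real.cos θ - Real.cos (θ + π / k)| := by
        have := hf.dist_le_mul (Real.cos θ)
          ⟨Real.neg_one_le_cos θ, Real.cos_le_one θ⟩ (Real.cos (θ + π / k))
          ⟨Real.neg_one_le_cos _, Real.cos_le_one _⟩
        rwa [Real.dist_eq, Real.dist_eq, Real.coe_toNNReal lam hlam.le] at this
      have hid : Real.cos θ - Real.cos (θ + π / k)
          = 2 * Real.sin d * Real.sin (θ + d) := by
        rw [hhd, Real.cos_sub_cos,
          show (θ + (θ + 2 * d)) / 2 = θ + d by ring,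
          show (θ - (θ + 2 * d)) / 2 = -d by ring, Real.sin_neg]
        ring
      have habs : |Real.cos θ - Real.cos (θ + π / k)|
          = 2 * Real.sin d * |Real.sin (θ + d)| := by
        rw [hid, abs_mul, abs_of_nonneg (by positivity : (0:ℝ) ≤ 2 * Real.sin d)]
      have hamgm : 2 * |Real.sin (θ + d)| * |Real.cos (k * θ)|
          ≤ Real.sin (θ + d) ^ 2 + Real.cos (k * θ) ^ 2 := by
        nlinarith [sq_nonneg (|Real.sin (θ + d)| - |Real.cos (k * θ)|),
          sq_abs (Real.sin (θ + d)), sq_abs (Real.cos (k * θ))]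
      calc |(g θ - g (θ + π / k)) * Real.cos (k * θ)|
          = |g θ - g (θ + π / k)| * |Real.cos (k * θ)| := abs_mul _ _
        _ ≤ (lam * |Real.cos θ - Real.cos (θ + π / k)|) * |Real.cos (k * θ)| :=
            mul_le_mul_of_nonneg_right hlip (abs_nonneg _)
        _ = lam * Real.sin d * (2 * |Real.sin (θ + d)| * |Real.cos (k * θ)|) := by
            rw [habs]; ring
        _ ≤ B θ := by
            rw [hBdef]
            exact mul_le_mul_of_nonneg_left hamgm (by positivity)
    have hintB : (∫ θ in (-π)..π, B θ) = lam * Real.sin d * (2 * π) := by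
      simp only [hBdef]
      rw [intervalIntegral.integral_const_mul, intervalIntegral.integral_add
        ((by fun_prop : Continuous fun θ : ℝ => Real.sin (θ + d) ^ 2).intervalIntegrable _ _)
        ((by fun_prop : Continuous fun θ : ℝ => Real.cos (k * θ) ^ 2).intervalIntegrable _ _),
        chebAux_sin_sq_int, chebAux_cos_sq_int k hk]
      ring
    have hcontInt : Continuous fun θ : ℝ => (g θ - g (θ + π / k)) * Real.cos (k * θ) :=
      (hgc.sub (hgc.comp (continuous_id.add continuous_const))).mul
        (Real.continuous_cos.comp (continuous_const.mul continuous_id))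
    calc |∫ θ in (-π)..π, (g θ - g (θ + π / k)) * Real.cos (k * θ)|
        ≤ ∫ θ in (-π)..π, |(g θ - g (θ + π / k)) * Real.cos (k * θ)| := by
          have := intervalIntegral.norm_integral_le_integral_norm
              (f := fun θ => (g θ - g (θ + π / k)) * Real.cos (k * θ))
              (μ := volume) (by linarith [Real.pi_pos] : -π ≤ π)
          simp only [Real.norm_eq_abs] at this
          exact this
      _ ≤ ∫ θ in (-π)..π, B θ := by
          refine intervalIntegral.integral_mono_on (by linarith [Real.pi_pos])
            (hcontInt.abs.intervalIntegrable _ _) ?_ (fun θ _ => hptbd θ)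
          exact ((by fun_prop : Continuous B)).intervalIntegrable _ _
      _ = lam * Real.sin d * (2 * π) := hintB
  -- combine: |J| ≤ lam * π² / (4k)
  have hJbd : |J| ≤ lam * π ^ 2 / (4 * k) := by
    have h4J : |4 * J| ≤ lam * Real.sin d * (2 * π) := by rw [hB]; exact hC
    have hsind : Real.sin d ≤ d := Real.sin_le hd0
    have : 4 * |J| ≤ lam * d * (2 * π) := by
      calc 4 * |J| = |4 * J| := by rw [abs_mul]; norm_num
        _ ≤ lam * Real.sin d * (2 * π) := h4J
        _ ≤ lam * d * (2 * π) := by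
            have := mul_le_mul_of_nonneg_left hsind hlam.le
            nlinarith [Real.pi_pos]
    rw [hd] at this
    rw [le_div_iff₀ (by positivity)]
    have hπ := Real.pi_pos
    calc |J| * (4 * k) = (4 * |J|) * k := by ring
      _ ≤ (lam * (π / (2 * k)) * (2 * π)) * k := by nlinarith
      _ = lam * π ^ 2 := by field_simp
  -- final numeric step: π² ≤ 8 c, i.e. π³ ≤ 32
  have hnum : π ^ 2 ≤ 8 * c := by
    have hcube : π ^ 3 < 32 := by nlinarith [Real.pi_lt_d2, Real.pi_pos]
    have : π ^ 2 / 8 ≤ c := by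
      rw [hc, Real.le_sqrt (by positivity) (by positivity), div_pow,
        div_le_div_iff₀ (by norm_num) (by norm_num)]
      nlinarith [Real.pi_pos, hcube, sq_nonneg π]
    linarith
  rw [hA, abs_div, abs_of_pos hcpos]
  rw [div_le_div_iff₀ hcpos hkR]
  have h1 : |J| * k ≤ lam * π ^ 2 / 4 := by
    have h2 := mul_le_mul_of_nonneg_right hJbd hkR.le
    calc |J| * k ≤ lam * π ^ 2 / (4 * k) * k := h2
      _ = lam * π ^ 2 / 4 := by field_simp
  calc |J| * k ≤ lam * π ^ 2 / 4 := h1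
    _ ≤ lam * (8 * c) / 4 := by nlinarith
    _ = 2 * lam * c := by ring
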